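/- Let Δ be a simplicial complex on the vertex set [n] = {1,…,n} and let k be a field. If H̃_{i−1}(Δ; k) ≠ 0 for some i ≥ 0, then there exists a facet F of Δ with 1 ∉ F and |F| ≥ i. -/

import Mathlib

open scoped BigOperators

noncomputable section
open Classical

/-! ## Generic (labeled) simplicial chain complexes and reduced homology over a field -/

section Homology

variable (K : Type) [Field K] {α : Type}

/-- Index type for chains: elements of `S` whose face (second component) has `j` elements. -/
def ChainIdx (S : Set (α × Finset ℕ)) (j : ℕ) : Type :=
  {q : α × Finset ℕ // q ∈ S ∧ q.2.card = j}

/-- The boundary of a basis element, with the usual simplicial signs. -/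
noncomputable def bdElt (S : Set (α × Finset ℕ)) (j : ℕ) (q : ChainIdx S (j + 1)) :
    ChainIdx S j →₀ K :=
  ∑ v ∈ q.1.2,
    if h : (q.1.1, q.1.2.erase v) ∈ S ∧ (q.1.2.erase v).card = j then
      ((-1 : K) ^ (q.1.2.filter (fun u => u ≤ v)).card) •
        Finsupp.single (⟨(q.1.1, q.1.2.erase v), h⟩ : ChainIdx S j) (1 : K)
    else 0

/-- The simplicial boundary map. -/
noncomputable def bd (S : Set (α × Finset ℕ)) (j : ℕ) :
    (ChainIdx S (j + 1) →₀ K) →ₗ[K] (ChainIdx S j →₀ K) :=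
  Finsupp.linearCombination K (bdElt K S j)

/-- Cycles in homological degree `j` (chains are indexed by the cardinality of faces;
degree `j` corresponds to reduced topological degree `j - 1`). -/
noncomputable def cycles (S : Set (α × Finset ℕ)) : (j : ℕ) → Submodule K (ChainIdx S j →₀ K)
  | 0 => ⊤
  | (i + 1) => LinearMap.ker (bd K S i)

/-- `rhd K S j` is the dimension of the reduced homology group `H̃_{j-1}` of the complex `S`
(the chain groups being finite dimensional, this is `dim` cycles `- dim` boundaries). -/
noncomputable def rhd (S : Set (α × Finset ℕ)) (j : ℕ) : ℕ :=
  Module.finrank K (cycles K S j) -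
    Module.finrank K (LinearMap.range (bd K S j) ⊓ cycles K S j : Submodule K _)

/-- `hdim K S j = dim_K H̃_j(S; K)`, for `j : ℤ` (zero for `j ≤ -2`). -/
noncomputable def hdim (S : Set (α × Finset ℕ)) (j : ℤ) : ℕ :=
  if 0 ≤ j + 1 then rhd K S (j + 1).toNat else 0

/-- View an unlabeled collection of faces as a labeled one (labels in `Unit`). -/
def lab (Δ : Set (Finset ℕ)) : Set (Unit × Finset ℕ) := {q | q.2 ∈ Δ}

/-- Dimension of reduced homology `H̃_{j-1}(Δ; K)` of a collection `Δ` of finite sets. -/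
noncomputable def rhd0 (Δ : Set (Finset ℕ)) (j : ℕ) : ℕ := rhd K (lab Δ) j

/-- Dimension of reduced homology `H̃_j(Δ; K)`, `j : ℤ`. -/
noncomputable def hdim0 (Δ : Set (Finset ℕ)) (j : ℤ) : ℕ := hdim K (lab Δ) j

end Homology

/-! ## Monomial ideals in `k[x_1, …, x_n]`, invariant under the symmetric group -/

section Poly

variable (K : Type) [Field K] (n : ℕ)

/-- The monomial `x^a` in `k[x_1, …, x_n]`. -/
noncomputable def mon (a : Fin n → ℕ) : MvPolynomial (Fin n) K :=
  MvPolynomial.monomial (Finsupp.equivFunOnFinite.symm a) 1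

/-- A monomial ideal: an ideal generated by a set of monomials. -/
def IsMonomialIdeal (I : Ideal (MvPolynomial (Fin n) K)) : Prop :=
  ∃ S : Set (Fin n → ℕ), I = Ideal.span (mon K n '' S)

/-- `I` is invariant under the action of `S_n` permuting the variables. -/
def IsSymmetricIdeal (I : Ideal (MvPolynomial (Fin n) K)) : Prop :=
  ∀ σ : Equiv.Perm (Fin n), Ideal.map (MvPolynomial.rename σ).toRingHom I = I

end Poly

/-! ## Auxiliary: cone homotopy -/

section HomotopyAux

variable (K : Type) [Field K] {α : Type}

attribute [reducible] ChainIdx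

/-- The cone operator on basis elements: send a face `G` (not containing `1`) to
`-(insert 1 G)` when the latter is in the complex, otherwise `0`. -/
noncomputable def hElt (S : Set (α × Finset ℕ)) (j : ℕ) (q : ChainIdx S j) :
    ChainIdx S (j + 1) →₀ K :=
  if h : (q.1.1, insert 1 q.1.2) ∈ S ∧ (insert 1 q.1.2).card = j + 1 then
    -Finsupp.single (⟨(q.1.1, insert 1 q.1.2), h⟩ : ChainIdx S (j + 1)) (1 : K)
  else 0

/-- The cone operator as a linear map. -/
noncomputable def hmap (S : Set (α × Finset ℕ)) (j : ℕ) :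
    (ChainIdx S j →₀ K) →ₗ[K] (ChainIdx S (j + 1) →₀ K) :=
  Finsupp.linearCombination K (hElt K S j)

lemma filter_le_one_card {H : Finset ℕ} (h1 : 1 ∈ H) (hpos : ∀ v ∈ H, 1 ≤ v) :
    (H.filter (fun u => u ≤ 1)).card = 1 := by
  have hH : H.filter (fun u => u ≤ 1) = {1} := by
    ext u
    simp only [Finset.mem_filter, Finset.mem_singleton]
    constructor
    · rintro ⟨hu, hle⟩; exact le_antisymm hle (hpos u hu)
    · rintro rfl; exact ⟨h1, le_rfl⟩
  rw [hH]; rfl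

lemma filter_insert_card {G : Finset ℕ} (h1 : 1 ∉ G) {v : ℕ} (hv : 1 ≤ v) :
    ((insert 1 G).filter (fun u => u ≤ v)).card = (G.filter (fun u => u ≤ v)).card + 1 := by
  rw [Finset.filter_insert, if_pos hv,
    Finset.card_insert_of_notMem (fun hc => h1 (Finset.mem_of_mem_filter _ hc))]

lemma bd_hElt_zero (S : Set (α × Finset ℕ))
    (hcone : ∀ p : α × Finset ℕ, p ∈ S → p.2.card = 0 → (p.1, insert 1 p.2) ∈ S)
    (q : ChainIdx S 0) :
    bd K S 0 (hElt K S 0 q) = Finsupp.single q 1 := by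
  obtain ⟨⟨a, G⟩, hqS, hqc⟩ := q
  have hG : G = ∅ := Finset.card_eq_zero.mp hqc
  subst hG
  have hmem : ((a, insert 1 (∅ : Finset ℕ)) : α × Finset ℕ) ∈ S := hcone (a, ∅) hqS rfl
  have hcond : ((a, insert 1 (∅ : Finset ℕ)) : α × Finset ℕ) ∈ S ∧
      (insert 1 (∅ : Finset ℕ)).card = 0 + 1 := ⟨hmem, by simp⟩
  have h1 : hElt K S 0 (⟨(a, ∅), hqS, hqc⟩ : ChainIdx S 0)
      = -Finsupp.single (⟨(a, insert 1 ∅), hcond⟩ : ChainIdx S 1) 1 := by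
    rw [hElt, dif_pos hcond]
  rw [h1, map_neg]
  have h2 : bd K S 0 (Finsupp.single (⟨(a, insert 1 ∅), hcond⟩ : ChainIdx S 1) 1)
      = bdElt K S 0 (⟨(a, insert 1 ∅), hcond⟩ : ChainIdx S 1) :=
    by rw [bd, Finsupp.linearCombination_single, one_smul]
  have hface : (insert 1 (∅ : Finset ℕ)).erase 1 = ∅ := by simp
  have hcond2 : ((a, (insert 1 (∅ : Finset ℕ)).erase 1) : α × Finset ℕ) ∈ S ∧
      ((insert 1 (∅ : Finset ℕ)).erase 1).card = 0 := by
    rw [hface]; exact ⟨hqS, rfl⟩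
  rw [h2, bdElt]
  rw [Finset.sum_insert (Finset.notMem_empty 1), Finset.sum_empty, add_zero,
    dif_pos hcond2]
  have hq' : (⟨(a, (insert 1 (∅ : Finset ℕ)).erase 1), hcond2⟩ : ChainIdx S 0)
      = ⟨(a, ∅), hqS, hqc⟩ := by
    apply Subtype.ext
    exact Prod.ext rfl hface
  rw [hq']
  have hfilter : ((insert 1 (∅ : Finset ℕ)).filter (fun u => u ≤ 1)).card = 1 := by
    rw [Finset.filter_insert, if_pos le_rfl]; simp
  rw [hfilter]
  simp

lemma homotopy_basis (S : Set (α × Finset ℕ)) (m : ℕ)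
    (hdc : ∀ p : α × Finset ℕ, p ∈ S → ∀ G ⊆ p.2, (p.1, G) ∈ S)
    (hpos : ∀ p : α × Finset ℕ, p ∈ S → ∀ v ∈ p.2, 1 ≤ v)
    (hcone : ∀ p : α × Finset ℕ, p ∈ S → p.2.card = m + 1 → (p.1, insert 1 p.2) ∈ S)
    (q : ChainIdx S (m + 1)) :
    bd K S (m + 1) (hElt K S (m + 1) q) + hmap K S m (bdElt K S m q)
      = Finsupp.single q 1 := by
  obtain ⟨⟨a, G⟩, hqS, hqc⟩ := q
  have hGc : G.card = m + 1 := hqc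
  have hGpos : ∀ v ∈ G, 1 ≤ v := fun v hv => hpos (a, G) hqS v hv
  have hcondE : ∀ v ∈ G, (a, G.erase v) ∈ S ∧ (G.erase v).card = m := by
    intro v hv
    refine ⟨hdc (a, G) hqS _ (Finset.erase_subset v G), ?_⟩
    rw [Finset.card_erase_of_mem hv, hGc]
    omega
  have hbdElt : bdElt K S m (⟨(a, G), hqS, hqc⟩ : ChainIdx S (m + 1)) =
      ∑ v ∈ G, (if h : (a, G.erase v) ∈ S ∧ (G.erase v).card = m then
        ((-1 : K) ^ (G.filter (fun u => u ≤ v)).card) •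
          Finsupp.single (⟨(a, G.erase v), h⟩ : ChainIdx S m) (1 : K)
      else 0) := rfl
  by_cases h1 : 1 ∈ G
  · -- the apex 1 is already in the face
    have hE0 : hElt K S (m + 1) (⟨(a, G), hqS, hqc⟩ : ChainIdx S (m + 1)) = 0 := by
      rw [hElt, dif_neg]
      rintro ⟨-, hc⟩
      rw [Finset.insert_eq_self.mpr h1, hGc] at hc
      omega
    rw [hE0, map_zero, zero_add, hbdElt, map_sum]
    have hterm : ∀ v ∈ G, hmap K S m (if h : (a, G.erase v) ∈ S ∧ (G.erase v).card = m then
          ((-1 : K) ^ (G.filter (fun u => u ≤ v)).card) •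
            Finsupp.single (⟨(a, G.erase v), h⟩ : ChainIdx S m) (1 : K)
        else 0) =
        (if v = 1 then Finsupp.single (⟨(a, G), hqS, hqc⟩ : ChainIdx S (m + 1)) 1 else 0) := by
      intro v hv
      rw [dif_pos (hcondE v hv), map_smul]
      have hh : hmap K S m (Finsupp.single (⟨(a, G.erase v), hcondE v hv⟩ : ChainIdx S m) 1)
          = hElt K S m ⟨(a, G.erase v), hcondE v hv⟩ := by
        rw [hmap, Finsupp.linearCombination_single K
          (v := hElt K S m) 1 (⟨(a, G.erase v), hcondE v hv⟩ : ChainIdx S m), one_smul]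
      rw [hh]
      by_cases hv1 : v = 1
      · subst hv1
        have hins : insert 1 (G.erase 1) = G := Finset.insert_erase h1
        have hcnd : (a, insert 1 (G.erase 1)) ∈ S ∧ (insert 1 (G.erase 1)).card = m + 1 := by
          rw [hins]; exact ⟨hqS, hGc⟩
        rw [hElt, dif_pos hcnd, if_pos rfl]
        have hqq : (⟨(a, insert 1 (G.erase 1)), hcnd⟩ : ChainIdx S (m + 1))
            = ⟨(a, G), hqS, hqc⟩ := Subtype.ext (Prod.ext rfl hins)
        rw [hqq, filter_le_one_card h1 hGpos]
        simp
      · have hE0' : hElt K S m (⟨(a, G.erase v), hcondE v hv⟩ : ChainIdx S m) = 0 := by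
          rw [hElt, dif_neg]
          rintro ⟨-, hc⟩
          have h1e : 1 ∈ G.erase v := Finset.mem_erase.mpr ⟨fun h => hv1 h.symm, h1⟩
          rw [Finset.insert_eq_self.mpr h1e, Finset.card_erase_of_mem hv, hGc] at hc
          omega
        rw [hE0', smul_zero, if_neg hv1]
    rw [Finset.sum_congr rfl hterm, Finset.sum_ite_eq' G 1
      (fun _ => Finsupp.single (⟨(a, G), hqS, hqc⟩ : ChainIdx S (m + 1)) 1), if_pos h1]
  · -- the apex 1 is not in the face: cone it
    have hins : (a, insert 1 G) ∈ S := hcone (a, G) hqS hGc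
    have hcard' : (insert 1 G).card = (m + 1) + 1 := by
      rw [Finset.card_insert_of_notMem h1, hGc]
    have hcnd' : (a, insert 1 G) ∈ S ∧ (insert 1 G).card = (m + 1) + 1 := ⟨hins, hcard'⟩
    have hpos' : ∀ v ∈ insert 1 G, 1 ≤ v := by
      intro v hv
      rcases Finset.mem_insert.mp hv with rfl | hv
      · exact le_rfl
      · exact hGpos v hv
    -- conditions for the coned sub-faces
    have hcndH : ∀ v ∈ G, (a, insert 1 (G.erase v)) ∈ S ∧
        (insert 1 (G.erase v)).card = m + 1 := by
      intro v hv
      refine ⟨hdc (a, insert 1 G) hins _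
        (Finset.insert_subset_insert 1 (Finset.erase_subset v G)), ?_⟩
      rw [Finset.card_insert_of_notMem (fun hc => h1 (Finset.mem_of_mem_erase hc)),
        Finset.card_erase_of_mem hv, hGc]
      omega
    -- the common family of terms
    set t : ℕ → (ChainIdx S (m + 1) →₀ K) := fun v =>
      if h : (a, insert 1 (G.erase v)) ∈ S ∧ (insert 1 (G.erase v)).card = m + 1 then
        ((-1 : K) ^ (G.filter (fun u => u ≤ v)).card) •
          Finsupp.single (⟨(a, insert 1 (G.erase v)), h⟩ : ChainIdx S (m + 1)) (1 : K)
      else 0 with ht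
    -- compute the first summand
    have hA : bd K S (m + 1) (hElt K S (m + 1) (⟨(a, G), hqS, hqc⟩ : ChainIdx S (m + 1)))
        = (Finsupp.single (⟨(a, G), hqS, hqc⟩ : ChainIdx S (m + 1)) (1 : K)
            : ChainIdx S (m + 1) →₀ K) + ∑ v ∈ G, t v := by
      rw [hElt, dif_pos hcnd', map_neg]
      have hbd' : bd K S (m + 1)
          (Finsupp.single (⟨(a, insert 1 G), hcnd'⟩ : ChainIdx S (m + 2)) 1)
          = bdElt K S (m + 1) (⟨(a, insert 1 G), hcnd'⟩ : ChainIdx S (m + 2)) := by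
        rw [bd, Finsupp.linearCombination_single K (v := bdElt K S (m + 1)) 1
          (⟨(a, insert 1 G), hcnd'⟩ : ChainIdx S (m + 2)), one_smul]
      rw [hbd']
      have hbdElt' : bdElt K S (m + 1) (⟨(a, insert 1 G), hcnd'⟩ : ChainIdx S (m + 2)) =
          ∑ w ∈ insert 1 G,
            (if h : (a, (insert 1 G).erase w) ∈ S ∧ ((insert 1 G).erase w).card = m + 1 then
              ((-1 : K) ^ ((insert 1 G).filter (fun u => u ≤ w)).card) •
                Finsupp.single (⟨(a, (insert 1 G).erase w), h⟩ : ChainIdx S (m + 1)) (1 : K)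
            else 0) := rfl
      rw [hbdElt', Finset.sum_insert h1]
      have hcndB1 : (a, (insert 1 G).erase 1) ∈ S ∧ ((insert 1 G).erase 1).card = m + 1 := by
        rw [Finset.erase_insert h1]; exact ⟨hqS, hGc⟩
      have hterm1 : (if h : (a, (insert 1 G).erase 1) ∈ S ∧ ((insert 1 G).erase 1).card = m + 1
          then ((-1 : K) ^ ((insert 1 G).filter (fun u => u ≤ 1)).card) •
            Finsupp.single (⟨(a, (insert 1 G).erase 1), h⟩ : ChainIdx S (m + 1)) (1 : K)
          else 0)
          = -Finsupp.single (⟨(a, G), hqS, hqc⟩ : ChainIdx S (m + 1)) 1 := by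
        rw [dif_pos hcndB1]
        have hqq : (⟨(a, (insert 1 G).erase 1), hcndB1⟩ : ChainIdx S (m + 1))
            = ⟨(a, G), hqS, hqc⟩ := Subtype.ext (Prod.ext rfl (Finset.erase_insert h1))
        rw [hqq, filter_le_one_card (Finset.mem_insert_self 1 G) hpos']
        simp
      have htermv : ∀ v ∈ G,
          (if h : (a, (insert 1 G).erase v) ∈ S ∧ ((insert 1 G).erase v).card = m + 1 then
            ((-1 : K) ^ ((insert 1 G).filter (fun u => u ≤ v)).card) •
              Finsupp.single (⟨(a, (insert 1 G).erase v), h⟩ : ChainIdx S (m + 1)) (1 : K)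
          else 0) = -(t v) := by
        intro v hv
        have hv1 : v ≠ 1 := fun h => h1 (h ▸ hv)
        have hface : (insert 1 G).erase v = insert 1 (G.erase v) :=
          Finset.erase_insert_of_ne (fun h => hv1 h.symm)
        have hcndBv : (a, (insert 1 G).erase v) ∈ S ∧ ((insert 1 G).erase v).card = m + 1 := by
          rw [hface]; exact hcndH v hv
        rw [dif_pos hcndBv]
        simp only [ht]
        rw [dif_pos (hcndH v hv)]
        have hqq : (⟨(a, (insert 1 G).erase v), hcndBv⟩ : ChainIdx S (m + 1))
            = ⟨(a, insert 1 (G.erase v)), hcndH v hv⟩ := Subtype.ext (Prod.ext rfl hface)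
        rw [hqq, filter_insert_card h1 (hGpos v hv), pow_succ]
        simp [neg_smul]
      rw [hterm1, Finset.sum_congr rfl htermv]
      simp [Finset.sum_neg_distrib]
      abel
    -- compute the second summand
    have hB : hmap K S m (bdElt K S m (⟨(a, G), hqS, hqc⟩ : ChainIdx S (m + 1)))
        = -∑ v ∈ G, t v := by
      rw [hbdElt, map_sum]
      have hterm : ∀ v ∈ G, hmap K S m
          (if h : (a, G.erase v) ∈ S ∧ (G.erase v).card = m then
            ((-1 : K) ^ (G.filter (fun u => u ≤ v)).card) •
              Finsupp.single (⟨(a, G.erase v), h⟩ : ChainIdx S m) (1 : K)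
          else 0) = -(t v) := by
        intro v hv
        rw [dif_pos (hcondE v hv), map_smul]
        have hh : hmap K S m (Finsupp.single (⟨(a, G.erase v), hcondE v hv⟩ : ChainIdx S m) 1)
            = hElt K S m ⟨(a, G.erase v), hcondE v hv⟩ := by
          rw [hmap, Finsupp.linearCombination_single K
            (v := hElt K S m) 1 (⟨(a, G.erase v), hcondE v hv⟩ : ChainIdx S m), one_smul]
        rw [hh, hElt, dif_pos (hcndH v hv)]
        simp only [ht]
        rw [dif_pos (hcndH v hv)]
        simp
      rw [Finset.sum_congr rfl hterm]
      simp [Finset.sum_neg_distrib]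
    rw [hA, hB]
    abel

lemma cycles_le_range (S : Set (α × Finset ℕ)) (i : ℕ)
    (hdc : ∀ p : α × Finset ℕ, p ∈ S → ∀ G ⊆ p.2, (p.1, G) ∈ S)
    (hpos : ∀ p : α × Finset ℕ, p ∈ S → ∀ v ∈ p.2, 1 ≤ v)
    (hcone : ∀ p : α × Finset ℕ, p ∈ S → p.2.card = i → (p.1, insert 1 p.2) ∈ S) :
    cycles K S i ≤ LinearMap.range (bd K S i) := by
  cases i with
  | zero =>
    intro z _
    refine ⟨hmap K S 0 z, ?_⟩
    have hid : (bd K S 0).comp (hmap K S 0) = LinearMap.id := by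
      apply Finsupp.lhom_ext
      intro q c
      have h1 : hmap K S 0 (Finsupp.single q c) = c • hElt K S 0 q :=
        Finsupp.linearCombination_single K (v := hElt K S 0) c q
      simp only [LinearMap.comp_apply, LinearMap.id_apply, h1, map_smul,
        bd_hElt_zero K S hcone q, Finsupp.smul_single, smul_eq_mul, mul_one]
    exact congrFun (congrArg DFunLike.coe hid) z
  | succ m =>
    intro z hz
    have hz' : bd K S m z = 0 := hz
    refine ⟨hmap K S (m + 1) z, ?_⟩
    have hid : (bd K S (m + 1)).comp (hmap K S (m + 1))
        + (hmap K S m).comp (bd K S m) = LinearMap.id := by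
      apply Finsupp.lhom_ext
      intro q c
      have h1 : hmap K S (m + 1) (Finsupp.single q c) = c • hElt K S (m + 1) q :=
        Finsupp.linearCombination_single K (v := hElt K S (m + 1)) c q
      have h2 : bd K S m (Finsupp.single q c) = c • bdElt K S m q :=
        Finsupp.linearCombination_single K (v := bdElt K S m) c q
      simp only [LinearMap.add_apply, LinearMap.comp_apply, LinearMap.id_apply, h1, h2,
        map_smul, ← smul_add, homotopy_basis K S m hdc hpos hcone q,
        Finsupp.smul_single, smul_eq_mul, mul_one]
    have := congrFun (congrArg DFunLike.coe hid) z
    simp only [LinearMap.add_apply, LinearMap.comp_apply, LinearMap.id_apply, hz',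
      map_zero, add_zero] at this
    exact this

lemma rhd_eq_zero (S : Set (α × Finset ℕ)) (i : ℕ)
    (hle : cycles K S i ≤ LinearMap.range (bd K S i)) :
    rhd K S i = 0 := by
  have h : LinearMap.range (bd K S i) ⊓ cycles K S i = cycles K S i :=
    le_antisymm inf_le_right (le_inf hle le_rfl)
  rw [rhd, h, Nat.sub_self]

end HomotopyAux

/-- Let `Δ` be a simplicial complex on the vertex set `[n] = {1, …, n}`
and `k` a field. If `H̃_{i-1}(Δ; k) ≠ 0` for some `i ≥ 0`, then there exists a facet `F`
of `Δ` with `1 ∉ F` and `|F| ≥ i`. -/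
theorem statement_10 (K : Type) [Field K] (n : ℕ) (Δ : Set (Finset ℕ))
    (hvert : ∀ F ∈ Δ, F ⊆ Finset.Icc 1 n)
    (hdown : ∀ F ∈ Δ, ∀ G : Finset ℕ, G ⊆ F → G ∈ Δ)
    (i : ℕ) (hne : hdim0 K Δ ((i : ℤ) - 1) ≠ 0) :
    ∃ F ∈ Δ, (∀ G ∈ Δ, F ⊆ G → G = F) ∧ 1 ∉ F ∧ i ≤ F.card := by
  by_contra hcon
  push_neg at hcon
  apply hne
  have hrw : hdim0 K Δ ((i : ℤ) - 1) = rhd K (lab Δ) i := by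
    simp [hdim0, hdim]
  rw [hrw]
  -- derive the cone property
  have hcone : ∀ p : Unit × Finset ℕ, p ∈ lab Δ → p.2.card = i →
      (p.1, insert 1 p.2) ∈ lab Δ := by
    rintro ⟨u, G⟩ hG hcard
    have hGΔ : G ∈ Δ := hG
    -- take a face of maximal cardinality containing G
    have hfin : {F | F ∈ Δ ∧ G ⊆ F}.Finite := by
      apply Set.Finite.subset (Set.Finite.subset (Finset.Icc 1 n).powerset.finite_toSet
        (fun F hF => Finset.mem_coe.mpr (Finset.mem_powerset.mpr (hvert F hF))))
      exact fun F hF => hF.1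
    obtain ⟨F, hF, hmax⟩ := Set.Finite.exists_maximalFor Finset.card _ hfin ⟨G, hGΔ, Finset.Subset.refl G⟩
    have hFfacet : ∀ G' ∈ Δ, F ⊆ G' → G' = F := by
      intro G' hG' hsub
      have hG'mem : G' ∈ {F | F ∈ Δ ∧ G ⊆ F} := ⟨hG', hF.2.trans hsub⟩
      have := le_antisymm (Finset.card_le_card hsub) (hmax hG'mem (Finset.card_le_card hsub))
      exact (Finset.eq_of_subset_of_card_le hsub (le_of_eq this.symm)).symm
    by_cases h1F : 1 ∈ F
    · exact hdown F hF.1 _ (Finset.insert_subset h1F hF.2)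
    · exact absurd (hcard ▸ Finset.card_le_card hF.2)
        (not_le.mpr (hcon F hF.1 hFfacet h1F))
  have hdc : ∀ p : Unit × Finset ℕ, p ∈ lab Δ → ∀ G ⊆ p.2, (p.1, G) ∈ lab Δ :=
    fun p hp G hG => hdown p.2 hp G hG
  have hpos : ∀ p : Unit × Finset ℕ, p ∈ lab Δ → ∀ v ∈ p.2, 1 ≤ v :=
    fun p hp v hv => (Finset.mem_Icc.mp (hvert p.2 hp hv)).1
  exact rhd_eq_zero K (lab Δ) i (cycles_le_range K (lab Δ) i hdc hpos hcone)
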